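/- Let A be a commutative ring, f ∈ A, and e ≥ 1, k ≥ 0 integers. Then R∪ := A[X,Y,t]/( XY − f·t^e, t^{k+1} ) is a free module over A[t]/(t^{k+1}) with basis given by the images of the monomials X^i for i ≥ 0 together with Y^j for j ≥ 1. -/

import Mathlib

open MvPolynomial

/-- The ideal defining `R∪ = A[X,Y,t]/(XY − f·t^e, t^{k+1})`, with
`X = X 0`, `Y = X 1`, `t = X 2`. -/
noncomputable def stmt8Icup (A : Type*) [CommRing A] (f : A) (e k : ℕ) :
    Ideal (MvPolynomial (Fin 3) A) :=
  Ideal.span {X 0 * X 1 - C f * (X 2) ^ e, (X 2) ^ (k + 1)}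

namespace Stmt8

variable {A : Type*} [CommRing A] (f : A) (e k : ℕ)

/-- index of the reduced monomial `X^(x-y)` or `Y^(y-x)` -/
def idx (x y : ℕ) : ℕ ⊕ ℕ := if y ≤ x then Sum.inl (x - y) else Sum.inr (y - x - 1)

lemma idx_succ (x y : ℕ) : idx (x + 1) (y + 1) = idx x y := by
  unfold idx
  split_ifs with h1 h2 <;> congr 1 <;> omega

lemma smul_mkB (a : A) (p : Polynomial A) :
    a • Ideal.Quotient.mk (Ideal.span {(Polynomial.X : Polynomial A) ^ (k + 1)}) p =
      Ideal.Quotient.mk _ (Polynomial.C a * p) := by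
  rw [← Polynomial.smul_eq_C_mul]
  exact (map_smul (Ideal.Quotient.mkₐ A _) a p).symm

noncomputable def g (d : Fin 3 →₀ ℕ) :
    (ℕ ⊕ ℕ) →₀ (Polynomial A ⧸ Ideal.span {(Polynomial.X : Polynomial A) ^ (k + 1)}) :=
  Finsupp.single (idx (d 0) (d 1))
    (Ideal.Quotient.mk _
      (Polynomial.C (f ^ min (d 0) (d 1)) * Polynomial.X ^ (d 2 + e * min (d 0) (d 1))))

noncomputable def N : MvPolynomial (Fin 3) A →ₗ[A]
    ((ℕ ⊕ ℕ) →₀ (Polynomial A ⧸ Ideal.span {(Polynomial.X : Polynomial A) ^ (k + 1)})) :=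
  (Finsupp.lsum ℕ fun d => LinearMap.toSpanSingleton A _ (g f e k d)) ∘ₗ
    (AddMonoidAlgebra.coeffLinearEquiv A).toLinearMap

lemma N_monomial (d : Fin 3 →₀ ℕ) (a : A) : N f e k (monomial d a) = a • g f e k d := by
  have : AddMonoidAlgebra.coeffLinearEquiv A (monomial d a : MvPolynomial (Fin 3) A) =
      Finsupp.single d a := rfl
  rw [N, LinearMap.comp_apply, LinearEquiv.coe_coe, this]
  erw [Finsupp.lsum_single]
  simp

lemma apply0 (d : Fin 3 →₀ ℕ) (u : Fin 3) (n : ℕ) (i : Fin 3) :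
    (d + Finsupp.single u n) i = d i + if u = i then n else 0 := by
  simp [Finsupp.single_apply]

lemma g_rel (d : Fin 3 →₀ ℕ) (a : A) :
    a • g f e k (d + (Finsupp.single 0 1 + Finsupp.single 1 1)) =
      (a * f) • g f e k (d + Finsupp.single 2 e) := by
  have h0 : (d + (Finsupp.single 0 1 + Finsupp.single 1 1) : Fin 3 →₀ ℕ) 0 = d 0 + 1 := by
    simp [Finsupp.single_apply]
  have h1 : (d + (Finsupp.single 0 1 + Finsupp.single 1 1) : Fin 3 →₀ ℕ) 1 = d 1 + 1 := by
    simp [Finsupp.single_apply]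
  have h2 : (d + (Finsupp.single 0 1 + Finsupp.single 1 1) : Fin 3 →₀ ℕ) 2 = d 2 := by
    simp [Finsupp.single_apply]
  have h0' : (d + Finsupp.single 2 e : Fin 3 →₀ ℕ) 0 = d 0 := by simp [Finsupp.single_apply]
  have h1' : (d + Finsupp.single 2 e : Fin 3 →₀ ℕ) 1 = d 1 := by simp [Finsupp.single_apply]
  have h2' : (d + Finsupp.single 2 e : Fin 3 →₀ ℕ) 2 = d 2 + e := by simp [Finsupp.single_apply]
  rw [g, g, h0, h1, h2, h0', h1', h2', idx_succ, Finsupp.smul_single, Finsupp.smul_single,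
    smul_mkB, smul_mkB]
  congr 2
  rw [Nat.succ_min_succ, show d 2 + e * (min (d 0) (d 1) + 1) = d 2 + e + e * min (d 0) (d 1) by
    ring, pow_succ]
  push_cast [map_mul]
  ring


lemma N_mul_rel (p : MvPolynomial (Fin 3) A) :
    N f e k (p * (X 0 * X 1 - C f * X 2 ^ e)) = 0 := by
  induction p using MvPolynomial.induction_on' with
  | add p q hp hq => rw [add_mul, map_add, hp, hq, add_zero]
  | monomial d a =>
      have key : (monomial d a : MvPolynomial (Fin 3) A) * (X 0 * X 1 - C f * X 2 ^ e) =
          monomial (d + (Finsupp.single 0 1 + Finsupp.single 1 1)) a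
            - monomial (d + Finsupp.single 2 e) (a * f) := by
        rw [mul_sub]
        congr 1
        · rw [show (X 0 * X 1 : MvPolynomial (Fin 3) A) =
              monomial (Finsupp.single 0 1 + Finsupp.single 1 1) 1 by
            rw [X, X, monomial_mul, one_mul], monomial_mul, mul_one]
        · rw [X_pow_eq_monomial, C_mul_monomial, monomial_mul]
          ring_nf
      rw [key, map_sub, N_monomial, N_monomial, g_rel, sub_self]

lemma N_mul_t (p : MvPolynomial (Fin 3) A) :
    N f e k (p * X 2 ^ (k + 1)) = 0 := by
  induction p using MvPolynomial.induction_on' with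
  | add p q hp hq => rw [add_mul, map_add, hp, hq, add_zero]
  | monomial d a =>
      rw [X_pow_eq_monomial, monomial_mul, mul_one, N_monomial]
      have h2 : (d + Finsupp.single 2 (k+1) : Fin 3 →₀ ℕ) 2 = d 2 + (k+1) := by
        simp [Finsupp.single_apply]
      set D : Fin 3 →₀ ℕ := d + Finsupp.single 2 (k+1) with hD
      have hz : (Ideal.Quotient.mk (Ideal.span {(Polynomial.X : Polynomial A) ^ (k + 1)}))
          (Polynomial.C (f ^ min (D 0) (D 1)) *
            Polynomial.X ^ (D 2 + e * min (D 0) (D 1))) = 0 := by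
        rw [Ideal.Quotient.eq_zero_iff_mem, Ideal.mem_span_singleton]
        refine Dvd.dvd.mul_left ?_ _
        exact pow_dvd_pow _ (by rw [hD, h2]; omega)
      rw [g, hz, Finsupp.single_zero, smul_zero]

lemma N_ideal (p : MvPolynomial (Fin 3) A) (hp : p ∈ stmt8Icup A f e k) :
    N f e k p = 0 := by
  rw [stmt8Icup, Ideal.mem_span_pair] at hp
  obtain ⟨u, v, rfl⟩ := hp
  rw [map_add, N_mul_rel, N_mul_t, add_zero]

/-- polynomial basis elements -/
noncomputable def basisP : ℕ ⊕ ℕ → MvPolynomial (Fin 3) A :=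
  Sum.elim (fun i => X 0 ^ i) (fun j => X 1 ^ (j + 1))

lemma basisP_inl (i : ℕ) : (basisP (Sum.inl i) : MvPolynomial (Fin 3) A) = X 0 ^ i := rfl
lemma basisP_inr (j : ℕ) : (basisP (Sum.inr j) : MvPolynomial (Fin 3) A) = X 1 ^ (j + 1) := rfl

lemma N_key (s : ℕ ⊕ ℕ) (q : Polynomial A) :
    N f e k (Polynomial.eval₂ MvPolynomial.C (X 2) q * basisP s) =
      Finsupp.single s (Ideal.Quotient.mk (Ideal.span {(Polynomial.X : Polynomial A) ^ (k + 1)}) q) := by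
  induction q using Polynomial.induction_on' with
  | add p q hp hq =>
      rw [Polynomial.eval₂_add, add_mul, map_add, hp, hq, map_add, Finsupp.single_add]
  | monomial n a =>
      rw [Polynomial.eval₂_monomial]
      have hd : ∀ u : Fin 3, ∀ m : ℕ,
          (MvPolynomial.C a * X 2 ^ n * (X u ^ m : MvPolynomial (Fin 3) A)) =
            monomial (Finsupp.single 2 n + Finsupp.single u m) a := by
        intro u m
        rw [X_pow_eq_monomial, X_pow_eq_monomial, mul_assoc, monomial_mul, one_mul,
          C_mul_monomial, mul_one]
      cases s with
      | inl i =>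
          rw [basisP, Sum.elim_inl, hd 0 i, N_monomial, g]
          have e0 : (Finsupp.single 2 n + Finsupp.single 0 i : Fin 3 →₀ ℕ) 0 = i := by
            simp [Finsupp.single_apply]
          have e1 : (Finsupp.single 2 n + Finsupp.single 0 i : Fin 3 →₀ ℕ) 1 = 0 := by
            simp [Finsupp.single_apply]
          have e2 : (Finsupp.single 2 n + Finsupp.single 0 i : Fin 3 →₀ ℕ) 2 = n := by
            simp [Finsupp.single_apply]
          rw [e0, e1, e2]
          rw [Nat.min_zero, show idx i 0 = Sum.inl i by simp [idx], Finsupp.smul_single,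
            smul_mkB, pow_zero, Polynomial.C_1, one_mul, mul_zero, add_zero,
            Polynomial.C_mul_X_pow_eq_monomial]
      | inr j =>
          rw [basisP, Sum.elim_inr, hd 1 (j+1), N_monomial, g]
          have e0 : (Finsupp.single 2 n + Finsupp.single 1 (j+1) : Fin 3 →₀ ℕ) 0 = 0 := by
            simp [Finsupp.single_apply]
          have e1 : (Finsupp.single 2 n + Finsupp.single 1 (j+1) : Fin 3 →₀ ℕ) 1 = j + 1 := by
            simp [Finsupp.single_apply]
          have e2 : (Finsupp.single 2 n + Finsupp.single 1 (j+1) : Fin 3 →₀ ℕ) 2 = n := by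
            simp [Finsupp.single_apply]
          rw [e0, e1, e2]
          rw [Nat.zero_min, show idx 0 (j+1) = Sum.inr j by simp [idx], Finsupp.smul_single,
            smul_mkB, pow_zero, Polynomial.C_1, one_mul, mul_zero, add_zero,
            Polynomial.C_mul_X_pow_eq_monomial]


variable (A) in
/-- the base ring `A[t]/(t^{k+1})` -/
abbrev B := Polynomial A ⧸ Ideal.span {(Polynomial.X : Polynomial A) ^ (k + 1)}

variable (ψ : B A k →+* (MvPolynomial (Fin 3) A ⧸ stmt8Icup A f e k))

noncomputable def Phi (c : (ℕ ⊕ ℕ) →₀ B A k) : MvPolynomial (Fin 3) A ⧸ stmt8Icup A f e k :=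
  c.sum (fun s a => ψ a *
    Sum.elim
      (fun i => Ideal.Quotient.mk (stmt8Icup A f e k) ((X 0 : MvPolynomial (Fin 3) A) ^ i))
      (fun j => Ideal.Quotient.mk (stmt8Icup A f e k) ((X 1 : MvPolynomial (Fin 3) A) ^ (j + 1))) s)

lemma elim_eq (s : ℕ ⊕ ℕ) :
    Sum.elim
      (fun i => Ideal.Quotient.mk (stmt8Icup A f e k) ((X 0 : MvPolynomial (Fin 3) A) ^ i))
      (fun j => Ideal.Quotient.mk (stmt8Icup A f e k) ((X 1 : MvPolynomial (Fin 3) A) ^ (j + 1))) s =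
      Ideal.Quotient.mk (stmt8Icup A f e k) (basisP s) := by
  cases s <;> rfl

lemma Phi_zero : Phi f e k ψ 0 = 0 := Finsupp.sum_zero_index

lemma Phi_add (c c' : (ℕ ⊕ ℕ) →₀ B A k) :
    Phi f e k ψ (c + c') = Phi f e k ψ c + Phi f e k ψ c' :=
  Finsupp.sum_add_index' (fun s => by simp) (fun s a b => by rw [map_add, add_mul])

lemma Phi_single (s : ℕ ⊕ ℕ) (b : B A k) :
    Phi f e k ψ (Finsupp.single s b) =
      ψ b * Ideal.Quotient.mk (stmt8Icup A f e k) (basisP s) := by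
  rw [Phi, Finsupp.sum_single_index (by simp), elim_eq]

variable (hψC : ∀ a : A,
      ψ (Ideal.Quotient.mk (Ideal.span {(Polynomial.X : Polynomial A) ^ (k + 1)})
          (Polynomial.C a)) =
        Ideal.Quotient.mk (stmt8Icup A f e k) (C a))
    (hψX : ψ (Ideal.Quotient.mk (Ideal.span {(Polynomial.X : Polynomial A) ^ (k + 1)})
          Polynomial.X) =
        Ideal.Quotient.mk (stmt8Icup A f e k) (X 2))

include hψC hψX in
lemma psi_mk (q : Polynomial A) :
    ψ (Ideal.Quotient.mk (Ideal.span {(Polynomial.X : Polynomial A) ^ (k + 1)}) q) =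
      Ideal.Quotient.mk (stmt8Icup A f e k) (Polynomial.eval₂ MvPolynomial.C (X 2) q) := by
  have : ψ.comp (Ideal.Quotient.mk (Ideal.span {(Polynomial.X : Polynomial A) ^ (k + 1)})) =
      (Ideal.Quotient.mk (stmt8Icup A f e k)).comp
        (Polynomial.eval₂RingHom MvPolynomial.C (X 2)) := by
    apply Polynomial.ringHom_ext
    · intro a
      simpa using hψC a
    · simpa using hψX
  have := congrArg (fun F => F q) this
  simpa using this

include hψC hψX in
lemma rep (c : (ℕ ⊕ ℕ) →₀ B A k) :
    ∃ P : MvPolynomial (Fin 3) A,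
      Ideal.Quotient.mk (stmt8Icup A f e k) P = Phi f e k ψ c ∧ N f e k P = c := by
  induction c using Finsupp.induction with
  | zero => exact ⟨0, by rw [map_zero, Phi_zero], by rw [map_zero]⟩
  | single_add s b c hs hb ih =>
      obtain ⟨P, hP1, hP2⟩ := ih
      obtain ⟨q, rfl⟩ := Ideal.Quotient.mk_surjective b
      refine ⟨Polynomial.eval₂ MvPolynomial.C (X 2) q * basisP s + P, ?_, ?_⟩
      · rw [map_add, hP1, Phi_add, Phi_single, map_mul, psi_mk f e k ψ hψC hψX]
      · rw [map_add, hP2, N_key]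

include hψC hψX in
lemma Phi_inj (c c' : (ℕ ⊕ ℕ) →₀ B A k) (h : Phi f e k ψ c = Phi f e k ψ c') : c = c' := by
  obtain ⟨P, hP1, hP2⟩ := rep f e k ψ hψC hψX c
  obtain ⟨P', hP1', hP2'⟩ := rep f e k ψ hψC hψX c'
  have hmem : P - P' ∈ stmt8Icup A f e k := by
    rw [← Ideal.Quotient.eq_zero_iff_mem, map_sub, hP1, hP1', h, sub_self]
  have := N_ideal f e k _ hmem
  rw [map_sub, sub_eq_zero, hP2, hP2'] at this
  exact this

include hψC hψX in
lemma mul_X_mem (c : (ℕ ⊕ ℕ) →₀ B A k) (i : Fin 3) :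
    ∃ c', Phi f e k ψ c * Ideal.Quotient.mk (stmt8Icup A f e k) (X i) = Phi f e k ψ c' := by
  induction c using Finsupp.induction with
  | zero => exact ⟨0, by rw [Phi_zero]; rw [zero_mul]⟩

  | single_add s b c hs hb ih =>
      obtain ⟨c₂, hc₂⟩ := ih
      have mkQ := Ideal.Quotient.mk (stmt8Icup A f e k)
      have hrel : Ideal.Quotient.mk (stmt8Icup A f e k) (X 0 * X 1) =
          Ideal.Quotient.mk (stmt8Icup A f e k) (C f * X 2 ^ e) := by
        rw [Ideal.Quotient.eq]
        exact Ideal.subset_span (Set.mem_insert _ _)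
      have hfe : ψ (Ideal.Quotient.mk (Ideal.span {(Polynomial.X : Polynomial A) ^ (k + 1)})
          (Polynomial.C f * Polynomial.X ^ e)) =
          Ideal.Quotient.mk (stmt8Icup A f e k) (C f * X 2 ^ e) := by
        rw [psi_mk f e k ψ hψC hψX]
        simp
      suffices h1 : ∃ c₁, ψ b * Ideal.Quotient.mk (stmt8Icup A f e k) (basisP s) *
          Ideal.Quotient.mk (stmt8Icup A f e k) (X i) = Phi f e k ψ c₁ by
        obtain ⟨c₁, hc₁⟩ := h1
        refine ⟨c₁ + c₂, ?_⟩
        rw [Phi_add, Phi_add, add_mul, Phi_single, hc₁, hc₂]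
      fin_cases i <;> simp only [Fin.reduceFinMk]
      · -- multiplication by X
        cases s with
        | inl i' =>
            refine ⟨Finsupp.single (Sum.inl (i' + 1)) b, ?_⟩
            rw [Phi_single, basisP_inl, basisP_inl, mul_assoc, ← map_mul,
              ← pow_succ]
        | inr j =>
            have key : Ideal.Quotient.mk (stmt8Icup A f e k) ((X 1 : MvPolynomial (Fin 3) A) ^ (j+1)) *
                Ideal.Quotient.mk (stmt8Icup A f e k) (X 0) =
                Ideal.Quotient.mk (stmt8Icup A f e k) (C f * X 2 ^ e) *
                  Ideal.Quotient.mk (stmt8Icup A f e k) ((X 1 : MvPolynomial (Fin 3) A) ^ j) := by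
              rw [← map_mul, ← hrel, ← map_mul]
              congr 1
              ring
            cases j with
            | zero =>
                refine ⟨Finsupp.single (Sum.inl 0) (b * Ideal.Quotient.mk _
                  (Polynomial.C f * Polynomial.X ^ e)), ?_⟩
                rw [Phi_single, basisP_inr, basisP_inl, mul_assoc, key, ← hfe, map_mul ψ,
                  pow_zero, pow_zero]
                ring
            | succ j' =>
                refine ⟨Finsupp.single (Sum.inr j') (b * Ideal.Quotient.mk _
                  (Polynomial.C f * Polynomial.X ^ e)), ?_⟩
                rw [Phi_single, basisP_inr, basisP_inr, mul_assoc, key, ← hfe, map_mul ψ]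
                ring
      · -- multiplication by Y
        cases s with
        | inl i' =>
            cases i' with
            | zero =>
                refine ⟨Finsupp.single (Sum.inr 0) b, ?_⟩
                rw [Phi_single, basisP_inl, basisP_inr, mul_assoc, ← map_mul]
                congr 2
            | succ i'' =>
                refine ⟨Finsupp.single (Sum.inl i'') (b * Ideal.Quotient.mk _
                  (Polynomial.C f * Polynomial.X ^ e)), ?_⟩
                have key : Ideal.Quotient.mk (stmt8Icup A f e k)
                    ((X 0 : MvPolynomial (Fin 3) A) ^ (i''+1)) *
                    Ideal.Quotient.mk (stmt8Icup A f e k) (X 1) =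
                    Ideal.Quotient.mk (stmt8Icup A f e k) (C f * X 2 ^ e) *
                      Ideal.Quotient.mk (stmt8Icup A f e k) ((X 0 : MvPolynomial (Fin 3) A) ^ i'') := by
                  rw [← map_mul, ← hrel, ← map_mul]
                  congr 1
                  ring
                rw [Phi_single, basisP_inl, basisP_inl, mul_assoc, key, ← hfe, map_mul ψ]
                ring
        | inr j =>
            refine ⟨Finsupp.single (Sum.inr (j + 1)) b, ?_⟩
            rw [Phi_single, basisP_inr, basisP_inr, mul_assoc, ← map_mul,
              ← pow_succ]
      · -- multiplication by t
        refine ⟨Finsupp.single s (b * Ideal.Quotient.mk _ Polynomial.X), ?_⟩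
        rw [Phi_single, map_mul, hψX]
        ring

include hψC hψX in
lemma Phi_surj (p : MvPolynomial (Fin 3) A) :
    ∃ c, Ideal.Quotient.mk (stmt8Icup A f e k) p = Phi f e k ψ c := by
  induction p using MvPolynomial.induction_on with
  | C a =>
      refine ⟨Finsupp.single (Sum.inl 0) (Ideal.Quotient.mk _ (Polynomial.C a)), ?_⟩
      rw [Phi_single, hψC, basisP_inl, pow_zero, map_one, mul_one]
  | add p q hp hq =>
      obtain ⟨c₁, h₁⟩ := hp
      obtain ⟨c₂, h₂⟩ := hq
      exact ⟨c₁ + c₂, by rw [map_add, h₁, h₂, Phi_add]⟩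
  | mul_X p i hp =>
      obtain ⟨c, hc⟩ := hp
      obtain ⟨c', hc'⟩ := mul_X_mem f e k ψ hψC hψX c i
      exact ⟨c', by rw [map_mul, hc, hc']⟩

end Stmt8


/-- `R∪ = A[X,Y,t]/(XY − f·t^e, t^{k+1})` is a free module over `A[t]/(t^{k+1})`
(acting through `ψ`) with basis the images of the monomials `X^i` (`i ≥ 0`) and
`Y^j` (`j ≥ 1`): every element has a unique finitely supported representation. -/
theorem stmt8 (A : Type*) [CommRing A] (f : A) (e k : ℕ) (he : 1 ≤ e)
    (ψ : (Polynomial A ⧸ Ideal.span {(Polynomial.X : Polynomial A) ^ (k + 1)}) →+*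
      (MvPolynomial (Fin 3) A ⧸ stmt8Icup A f e k))
    (hψC : ∀ a : A,
      ψ (Ideal.Quotient.mk (Ideal.span {(Polynomial.X : Polynomial A) ^ (k + 1)})
          (Polynomial.C a)) =
        Ideal.Quotient.mk (stmt8Icup A f e k) (C a))
    (hψX : ψ (Ideal.Quotient.mk (Ideal.span {(Polynomial.X : Polynomial A) ^ (k + 1)})
          Polynomial.X) =
        Ideal.Quotient.mk (stmt8Icup A f e k) (X 2)) :
    ∀ r : MvPolynomial (Fin 3) A ⧸ stmt8Icup A f e k,
      ∃! c : (ℕ ⊕ ℕ) →₀ (Polynomial A ⧸ Ideal.span {(Polynomial.X : Polynomial A) ^ (k + 1)}),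
        r = c.sum (fun s a => ψ a *
          Sum.elim
            (fun i => Ideal.Quotient.mk (stmt8Icup A f e k)
              ((X 0 : MvPolynomial (Fin 3) A) ^ i))
            (fun j => Ideal.Quotient.mk (stmt8Icup A f e k)
              ((X 1 : MvPolynomial (Fin 3) A) ^ (j + 1))) s) := by
  intro r
  obtain ⟨p, rfl⟩ := Ideal.Quotient.mk_surjective r
  obtain ⟨c, hc⟩ := Stmt8.Phi_surj f e k ψ hψC hψX p
  refine ⟨c, hc, fun y hy => ?_⟩
  exact Stmt8.Phi_inj f e k ψ hψC hψX y c ((hy.symm.trans hc) : _)
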